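/- For the function Θ(x, z) := ∫_{ℝ²} |K(x−y)| p(y) dy, where |K(w)| ≤ C₀/|w| and p is a probability density on ℝ² satisfying p(y) ≤ (M/(2πσ²)) e^{−|y−z|²/(Mσ²)}, there exists a constant C (depending only on C₀ and M) such that |Θ(x, z)| ≤ C/|x − z| for all x ≠ z. -/

import Mathlib

open MeasureTheory

open Metric Set

lemma vol_ball2 (c : EuclideanSpace ℝ (Fin 2)) (s : ℝ) (hs : 0 ≤ s) :
    volume (ball c s) = ENNReal.ofReal (Real.pi * s ^ 2) := by
  rw [EuclideanSpace.volume_ball]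
  have h2 : (Fintype.card (Fin 2)) = 2 := by simp
  rw [h2]
  rw [show ((2:ℕ):ℝ)/2 + 1 = 2 by norm_num, Real.Gamma_two, div_one,
    Real.sq_sqrt Real.pi_nonneg, ← ENNReal.ofReal_pow hs, ← ENNReal.ofReal_mul (by positivity),
    mul_comm]

lemma lint_ball_inv {r : ℝ} (hr : 0 < r) :
    ∫⁻ w in ball (0 : EuclideanSpace ℝ (Fin 2)) r, ENNReal.ofReal ‖w‖⁻¹ ≤
      ENNReal.ofReal (2 * Real.pi * r) := by
  have hm : AEMeasurable (fun w : EuclideanSpace ℝ (Fin 2) => ‖w‖⁻¹)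
      (volume.restrict (ball 0 r)) := (measurable_norm.inv).aemeasurable
  rw [lintegral_eq_lintegral_meas_lt _ (Filter.Eventually.of_forall fun w => by positivity) hm]
  have step1 : ∀ t ∈ Ioi (0:ℝ),
      (volume.restrict (ball (0:EuclideanSpace ℝ (Fin 2)) r)) {w | t < ‖w‖⁻¹}
        ≤ ENNReal.ofReal (Real.pi * (min r t⁻¹)^2) := by
    intro t ht
    have htpos : (0:ℝ) < t := ht
    rw [Measure.restrict_apply (show MeasurableSet {w : EuclideanSpace ℝ (Fin 2) | t < ‖w‖⁻¹} from
      measurableSet_lt measurable_const measurable_norm.inv)]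
    have hsub : {w : EuclideanSpace ℝ (Fin 2) | t < ‖w‖⁻¹} ∩ ball 0 r
        ⊆ ball (0 : EuclideanSpace ℝ (Fin 2)) (min r t⁻¹) := by
      rintro w ⟨hw1, hw2⟩
      rw [mem_ball_zero_iff] at hw2 ⊢
      refine lt_min hw2 ?_
      rcases eq_or_lt_of_le (norm_nonneg w) with h0 | h0
      · rw [← h0]; positivity
      · have := inv_strictAnti₀ htpos hw1
        rwa [inv_inv] at this
    calc volume ({w : EuclideanSpace ℝ (Fin 2) | t < ‖w‖⁻¹} ∩ ball 0 r)
        ≤ volume (ball (0 : EuclideanSpace ℝ (Fin 2)) (min r t⁻¹)) := measure_mono hsub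
      _ = ENNReal.ofReal (Real.pi * (min r t⁻¹)^2) :=
          vol_ball2 _ _ (le_min hr.le (by positivity))
  calc ∫⁻ t in Ioi (0:ℝ),
        (volume.restrict (ball (0:EuclideanSpace ℝ (Fin 2)) r)) {w | t < ‖w‖⁻¹}
      ≤ ∫⁻ t in Ioi (0:ℝ), ENNReal.ofReal (Real.pi * (min r t⁻¹)^2) :=
        setLIntegral_mono' measurableSet_Ioi step1
    _ ≤ ENNReal.ofReal (2 * Real.pi * r) := by
        rw [← Ioc_union_Ioi_eq_Ioi (le_of_lt (inv_pos.mpr hr)),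
          lintegral_union measurableSet_Ioi (Ioc_disjoint_Ioi le_rfl)]
        have h1 : ∫⁻ t in Ioc (0:ℝ) r⁻¹, ENNReal.ofReal (Real.pi * (min r t⁻¹)^2)
            ≤ ENNReal.ofReal (Real.pi * r) := by
          have : ∫⁻ t in Ioc (0:ℝ) r⁻¹, ENNReal.ofReal (Real.pi * (min r t⁻¹)^2)
              ≤ ∫⁻ _ in Ioc (0:ℝ) r⁻¹, ENNReal.ofReal (Real.pi * r^2) := by
            refine setLIntegral_mono' measurableSet_Ioc fun t ht => ?_
            refine ENNReal.ofReal_le_ofReal (mul_le_mul_of_nonneg_left ?_ Real.pi_nonneg)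
            have h0 : 0 ≤ min r t⁻¹ := le_min hr.le (by simpa using (inv_pos.mpr ht.1).le)
            have h1 : min r t⁻¹ ≤ r := min_le_left _ _
            nlinarith
          refine this.trans ?_
          rw [setLIntegral_const, Real.volume_Ioc, ← ENNReal.ofReal_mul (by positivity)]
          refine ENNReal.ofReal_le_ofReal ?_
          rw [sub_zero]
          rw [show Real.pi * r^2 * r⁻¹ = Real.pi * r * (r * r⁻¹) by ring, mul_inv_cancel₀ hr.ne',
            mul_one]
        have h2 : ∫⁻ t in Ioi r⁻¹, ENNReal.ofReal (Real.pi * (min r t⁻¹)^2)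
            = ENNReal.ofReal (Real.pi * r) := by
          have hco : ∀ᵐ t ∂(volume : Measure ℝ), t ∈ Ioi r⁻¹ →
              ENNReal.ofReal (Real.pi * (min r t⁻¹)^2)
                = ENNReal.ofReal (Real.pi * t ^ (-2:ℝ)) := by
            refine Filter.Eventually.of_forall fun t ht => ?_
            have htpos : (0:ℝ) < t := lt_trans (inv_pos.mpr hr) ht
            have hmin : min r t⁻¹ = t⁻¹ := min_eq_right (by
              have := inv_strictAnti₀ (inv_pos.mpr hr) ht
              rw [inv_inv] at this
              exact this.le)
            rw [hmin, show ((t⁻¹)^2 : ℝ) = t ^ (-2:ℝ) by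
              rw [Real.rpow_neg htpos.le, show ((2:ℝ) = ((2:ℕ):ℝ)) by norm_num,
                Real.rpow_natCast, inv_pow]]
          rw [setLIntegral_congr_fun_ae measurableSet_Ioi hco]
          rw [← ofReal_integral_eq_lintegral_ofReal]
          · rw [MeasureTheory.integral_const_mul, integral_Ioi_rpow_of_lt (by norm_num)
              (inv_pos.mpr hr)]
            norm_num [Real.rpow_neg_one]
          · exact (integrableOn_Ioi_rpow_of_lt (by norm_num) (inv_pos.mpr hr)).const_mul _
          · filter_upwards [ae_restrict_mem measurableSet_Ioi] with t ht
            have htpos : (0:ℝ) < t := lt_trans (inv_pos.mpr hr) ht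
            positivity
        calc _ ≤ ENNReal.ofReal (Real.pi * r) + ENNReal.ofReal (Real.pi * r) :=
              add_le_add h1 h2.le
          _ = ENNReal.ofReal (2 * Real.pi * r) := by
              rw [← ENNReal.ofReal_add (by positivity) (by positivity)]; ring_nf

/-- If `|K(w)| ≤ C₀/|w|` and `p` is a probability density with Gaussian upper bound
`p(y) ≤ (M/(2πσ²)) e^{−|y−z|²/(Mσ²)}`, then `Θ(x,z) = ∫ |K(x−y)| p(y) dy` satisfies
`Θ(x,z) ≤ C/|x−z|` for a constant `C` depending only on `C₀` and `M`. -/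
theorem smoothed_kernel_bound (C₀ M : ℝ) (hC₀ : 0 < C₀) (hM : 0 < M) :
    ∃ C : ℝ, 0 < C ∧
      ∀ (σ : ℝ), 0 < σ →
      ∀ (K : EuclideanSpace ℝ (Fin 2) → EuclideanSpace ℝ (Fin 2))
        (p : EuclideanSpace ℝ (Fin 2) → ℝ) (z : EuclideanSpace ℝ (Fin 2)),
        (∀ w : EuclideanSpace ℝ (Fin 2), w ≠ 0 → ‖K w‖ ≤ C₀ / ‖w‖) →
        (∀ y, 0 ≤ p y) → (∫ y, p y) = 1 →
        (∀ y, p y ≤ M / (2 * Real.pi * σ ^ 2) * Real.exp (-‖y - z‖ ^ 2 / (M * σ ^ 2))) →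
        ∀ x : EuclideanSpace ℝ (Fin 2), x ≠ z →
          (∫ y, ‖K (x - y)‖ * p y) ≤ C / ‖x - z‖ := by
  refine ⟨2*C₀ + 2*C₀*M^2, by positivity, ?_⟩
  intro σ hσ K p z hK hp0 hp1 hpb x hxz
  set d := ‖x - z‖ with hd_def
  have hd : 0 < d := norm_pos_iff.mpr (sub_ne_zero.mpr hxz)
  set r := d/2 with hr_def
  have hr : 0 < r := by positivity
  have hCd : 0 ≤ (2*C₀ + 2*C₀*M^2) / d := by positivity
  by_cases hg : Integrable (fun y => ‖K (x - y)‖ * p y)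
  swap
  · rw [integral_undef hg]; exact hCd
  have hpint : Integrable p := by
    by_contra h
    rw [integral_undef h] at hp1; norm_num at hp1
  -- far field bound
  have far : ∫ y in (ball x r)ᶜ, ‖K (x - y)‖ * p y ≤ 2*C₀/d := by
    have hb : ∀ y ∈ (ball x r)ᶜ, ‖K (x - y)‖ * p y ≤ (C₀/r) * p y := by
      intro y hy
      have hyx : r ≤ ‖x - y‖ := by
        rw [mem_compl_iff, mem_ball, not_lt, dist_eq_norm] at hy
        calc r ≤ ‖y - x‖ := hy
          _ = ‖x - y‖ := norm_sub_rev _ _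
      have hne : x - y ≠ 0 := by
        intro h; rw [h, norm_zero] at hyx; linarith
      refine mul_le_mul_of_nonneg_right ((hK _ hne).trans ?_) (hp0 y)
      gcongr
    calc ∫ y in (ball x r)ᶜ, ‖K (x - y)‖ * p y
        ≤ ∫ y in (ball x r)ᶜ, (C₀/r) * p y :=
          setIntegral_mono_on hg.integrableOn (hpint.const_mul _).integrableOn
            measurableSet_ball.compl hb
      _ ≤ ∫ y, (C₀/r) * p y :=
          setIntegral_le_integral (hpint.const_mul _)
            (Filter.Eventually.of_forall fun y => mul_nonneg (by positivity) (hp0 y))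
      _ = C₀/r := by rw [integral_const_mul, hp1, mul_one]
      _ = 2*C₀/d := by rw [hr_def]; field_simp
  -- near field bound
  set P := M / (2 * Real.pi * σ ^ 2) * Real.exp (-(r^2 / (M * σ ^ 2))) with hP_def
  have hP0 : 0 ≤ P := by positivity
  have hP : ∀ y ∈ ball x r, p y ≤ P := by
    intro y hy
    refine (hpb y).trans ?_
    refine mul_le_mul_of_nonneg_left (Real.exp_le_exp.mpr ?_) (by positivity)
    have hxy : ‖x - y‖ < r := by
      rw [mem_ball, dist_eq_norm] at hy
      calc ‖x - y‖ = ‖y - x‖ := norm_sub_rev _ _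
        _ < r := hy
    have h1 : r ≤ ‖y - z‖ := by
      have htr : d ≤ ‖x - y‖ + ‖y - z‖ := by
        calc d = ‖(x - y) + (y - z)‖ := by rw [hd_def]; congr 1; abel
          _ ≤ ‖x - y‖ + ‖y - z‖ := norm_add_le _ _
      have : d = r + r := by rw [hr_def]; ring
      linarith
    have h2 : r^2 ≤ ‖y - z‖^2 := by nlinarith [norm_nonneg (y - z)]
    rw [show -‖y - z‖ ^ 2 / (M * σ ^ 2) = -(‖y - z‖^2 / (M*σ^2)) from neg_div _ _]
    refine neg_le_neg ?_
    gcongr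
  have near : ∫ y in ball x r, ‖K (x - y)‖ * p y ≤ 2*C₀*M^2/d := by
    have hnn : 0 ≤ᵐ[volume.restrict (ball x r)] fun y => ‖K (x - y)‖ * p y :=
      Filter.Eventually.of_forall fun y => mul_nonneg (norm_nonneg _) (hp0 y)
    rw [integral_eq_lintegral_of_nonneg_ae hnn hg.restrict.aestronglyMeasurable]
    have hx_ne : ∀ᵐ y ∂(volume : Measure (EuclideanSpace ℝ (Fin 2))), y ≠ x := by
      rw [ae_iff]
      simpa only [not_not, Set.setOf_eq_eq_singleton] using measure_singleton x
    have hae : ∀ᵐ y ∂(volume.restrict (ball x r)),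
        ENNReal.ofReal (‖K (x - y)‖ * p y) ≤ ENNReal.ofReal ((C₀ * P) * ‖x - y‖⁻¹) := by
      filter_upwards [ae_restrict_mem measurableSet_ball, ae_restrict_of_ae hx_ne]
        with y hy hne
      refine ENNReal.ofReal_le_ofReal ?_
      have hsubne : x - y ≠ 0 := sub_ne_zero.mpr (Ne.symm hne)
      calc ‖K (x - y)‖ * p y ≤ (C₀ / ‖x - y‖) * P :=
            mul_le_mul (hK _ hsubne) (hP y hy) (hp0 y) (by positivity)
        _ = (C₀ * P) * ‖x - y‖⁻¹ := by rw [div_eq_mul_inv]; ring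
    have hlint : ∫⁻ y in ball x r, ENNReal.ofReal (‖K (x - y)‖ * p y)
        ≤ ENNReal.ofReal (C₀ * P) * ENNReal.ofReal (2 * Real.pi * r) := by
      calc ∫⁻ y in ball x r, ENNReal.ofReal (‖K (x - y)‖ * p y)
          ≤ ∫⁻ y in ball x r, ENNReal.ofReal ((C₀ * P) * ‖x - y‖⁻¹) := lintegral_mono_ae hae
        _ = ENNReal.ofReal (C₀ * P) * ∫⁻ y in ball x r, ENNReal.ofReal ‖x - y‖⁻¹ := by
            simp_rw [ENNReal.ofReal_mul (mul_nonneg hC₀.le hP0)]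
            rw [lintegral_const_mul' _ _ ENNReal.ofReal_ne_top]
        _ ≤ ENNReal.ofReal (C₀ * P) * ENNReal.ofReal (2 * Real.pi * r) := by
            refine mul_le_mul_right ?_ _
            have hpre : (fun y : EuclideanSpace ℝ (Fin 2) => x - y) ⁻¹' (ball 0 r)
                = ball x r := by
              ext y
              simp [mem_ball_zero_iff, mem_ball, dist_eq_norm, norm_sub_rev x y]
            have hcv := (Measure.measurePreserving_sub_left
                (volume : Measure (EuclideanSpace ℝ (Fin 2))) x).setLIntegral_comp_preimage
                (measurableSet_ball (x := (0 : EuclideanSpace ℝ (Fin 2))) (ε := r))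
                (f := fun w => ENNReal.ofReal ‖w‖⁻¹) (measurable_norm.inv.ennreal_ofReal)
            rw [hpre] at hcv
            exact hcv.le.trans (lint_ball_inv hr)
    calc (∫⁻ y in ball x r, ENNReal.ofReal (‖K (x - y)‖ * p y)).toReal
        ≤ (ENNReal.ofReal (C₀ * P) * ENNReal.ofReal (2 * Real.pi * r)).toReal :=
          ENNReal.toReal_mono (ENNReal.mul_ne_top ENNReal.ofReal_ne_top ENNReal.ofReal_ne_top)
            hlint
      _ = (C₀ * P) * (2 * Real.pi * r) := by
          rw [← ENNReal.ofReal_mul (by positivity), ENNReal.toReal_ofReal (by positivity)]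
      _ ≤ 2*C₀*M^2/d := by
          set u := r^2 / (M * σ^2) with hu_def
          have hu : 0 ≤ u := by positivity
          have hue : u * Real.exp (-u) ≤ 1 := by
            have h := Real.add_one_le_exp u
            calc u * Real.exp (-u) ≤ Real.exp u * Real.exp (-u) :=
                  mul_le_mul_of_nonneg_right (by linarith) (Real.exp_pos _).le
              _ = 1 := by rw [← Real.exp_add]; simp
          have hkey : (C₀ * P) * (2 * Real.pi * r) = (2*C₀*M^2/d) * (u * Real.exp (-u)) := by
            rw [hP_def, hu_def, hr_def]
            have hπ := Real.pi_ne_zero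
            field_simp
          rw [hkey]
          calc (2*C₀*M^2/d) * (u * Real.exp (-u)) ≤ (2*C₀*M^2/d) * 1 :=
                mul_le_mul_of_nonneg_left hue (by positivity)
            _ = 2*C₀*M^2/d := mul_one _
  calc (∫ y, ‖K (x - y)‖ * p y)
      = (∫ y in ball x r, ‖K (x - y)‖ * p y) + ∫ y in (ball x r)ᶜ, ‖K (x - y)‖ * p y :=
        (integral_add_compl measurableSet_ball hg).symm
    _ ≤ 2*C₀*M^2/d + 2*C₀/d := add_le_add near far
    _ = (2*C₀ + 2*C₀*M^2) / d := by ring
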